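/- Let α > 1 and let λ : [r₀, ∞) → ℝ be a differentiable function satisfying λ'(r) + λ(r)² ≤ α² for all r ≥ r₀, with λ(r₀) ∈ (-α, α). Then for all r ≥ r₀, λ(r) ≤ α·(C·e^{2αr} - 1)/(C·e^{2αr} + 1), where C = ((α + λ(r₀))/(α - λ(r₀)))·e^{-2α r₀}. In particular λ(r) < α for all r ≥ r₀. -/

import Mathlib

open Real

/-- Upper-bound half of the Riccati comparison estimate: if `λ' + λ² ≤ α²` on `[r₀, ∞)`
with `λ(r₀) ∈ (-α, α)`, then `λ(r) ≤ α (C e^{2αr} - 1)/(C e^{2αr} + 1)` where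
`C = ((α + λ(r₀))/(α - λ(r₀))) e^{-2α r₀}`; in particular `λ(r) < α`. -/
theorem riccati_upper_bound (α r₀ : ℝ) (hα : 1 < α) (lam : ℝ → ℝ)
    (hdiff : ∀ r ≥ r₀, DifferentiableAt ℝ lam r)
    (hineq : ∀ r ≥ r₀, deriv lam r + (lam r) ^ 2 ≤ α ^ 2)
    (h0 : lam r₀ ∈ Set.Ioo (-α) α) :
    ∀ r ≥ r₀,
      lam r ≤ α * (((α + lam r₀) / (α - lam r₀)) * Real.exp (-2 * α * r₀) *
          Real.exp (2 * α * r) - 1) /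
        (((α + lam r₀) / (α - lam r₀)) * Real.exp (-2 * α * r₀) *
          Real.exp (2 * α * r) + 1) ∧
      lam r < α := by
  obtain ⟨h0l, h0r⟩ := h0
  have hapos : (0:ℝ) < α := lt_trans one_pos hα
  set C : ℝ := ((α + lam r₀) / (α - lam r₀)) * Real.exp (-2 * α * r₀) with hCdef
  have hC : 0 < C := by
    apply mul_pos
    · exact div_pos (by linarith) (by linarith)
    · exact Real.exp_pos _
  set μ : ℝ → ℝ := fun s => α * (C * Real.exp (2 * α * s) - 1) /
      (C * Real.exp (2 * α * s) + 1) with hμdef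
  have hDpos : ∀ s : ℝ, 0 < C * Real.exp (2 * α * s) + 1 := fun s => by positivity
  -- μ solves μ' = α² - μ²
  have hμder : ∀ s : ℝ, HasDerivAt μ (α ^ 2 - μ s ^ 2) s := by
    intro s
    have h1 : HasDerivAt (fun t : ℝ => 2 * α * t) (2 * α) s := by
      simpa using (hasDerivAt_id s).const_mul (2 * α)
    have hD : HasDerivAt (fun t : ℝ => C * Real.exp (2 * α * t))
        (C * (Real.exp (2 * α * s) * (2 * α))) s := (h1.exp).const_mul C
    have hnum : HasDerivAt (fun t : ℝ => α * (C * Real.exp (2 * α * t) - 1))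
        (α * (C * (Real.exp (2 * α * s) * (2 * α)))) s := (hD.sub_const 1).const_mul α
    have hden : HasDerivAt (fun t : ℝ => C * Real.exp (2 * α * t) + 1)
        (C * (Real.exp (2 * α * s) * (2 * α))) s := hD.add_const 1
    have hne : C * Real.exp (2 * α * s) + 1 ≠ 0 := ne_of_gt (hDpos s)
    have := hnum.div hden hne
    convert this using 1
    case e'_4 => rfl
    case e'_5 => rfl
    case e'_8 => rfl
    rw [hμdef]
    field_simp
    ring
  -- μ(r₀) = lam r₀
  have hCexp : C * Real.exp (2 * α * r₀) = (α + lam r₀) / (α - lam r₀) := by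
    rw [hCdef, mul_assoc, ← Real.exp_add, show -2 * α * r₀ + 2 * α * r₀ = 0 by ring,
      Real.exp_zero, mul_one]
  have hμ0 : μ r₀ = lam r₀ := by
    rw [hμdef]
    simp only [hCexp]
    have hne : α - lam r₀ ≠ 0 := by linarith
    rw [div_eq_iff (by rw [← hCexp]; exact ne_of_gt (hDpos r₀)) ]
    field_simp
    ring
  -- μ < α everywhere
  have hμlt : ∀ s : ℝ, μ s < α := by
    intro s
    rw [hμdef, div_lt_iff₀ (hDpos s)]
    nlinarith [hDpos s, Real.exp_pos (2 * α * s), hC.le]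
  -- continuous extension of lam
  set f : ℝ → ℝ := fun s => lam (max s r₀) with hfdef
  have hfeq : ∀ s, r₀ ≤ s → f s = lam s := by
    intro s hs; rw [hfdef]; simp [max_eq_left hs]
  have hfcont : Continuous f := by
    rw [continuous_iff_continuousAt]
    intro s
    have h1 : ContinuousAt lam ((fun t : ℝ => max t r₀) s) :=
      (hdiff _ (le_max_right s r₀)).continuousAt
    have h2 : ContinuousAt (fun t : ℝ => max t r₀) s :=
      (continuous_id.max continuous_const).continuousAt
    show ContinuousAt (lam ∘ fun t : ℝ => max t r₀) s
    exact ContinuousAt.comp (x := s) (f := fun t : ℝ => max t r₀) h1 h2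
  have hμcont : Continuous μ := by
    rw [continuous_iff_continuousAt]
    exact fun s => (hμder s).differentiableAt.continuousAt
  have hgcont : Continuous fun s => f s + μ s := hfcont.add hμcont
  set I : ℝ → ℝ := fun s => ∫ t in r₀..s, (f t + μ t) with hIdef
  have hIder : ∀ s : ℝ, HasDerivAt I (f s + μ s) s := by
    intro s
    exact intervalIntegral.integral_hasDerivAt_right
      (hgcont.intervalIntegrable r₀ s)
      (hgcont.stronglyMeasurable.stronglyMeasurableAtFilter)
      hgcont.continuousAt
  set g : ℝ → ℝ := fun s => (μ s - f s) * Real.exp (I s) with hgdef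
  -- g has a nonnegative derivative on Ioi r₀
  have hgder : ∀ x ∈ Set.Ioi r₀, HasDerivAt g
      (((α ^ 2 - μ x ^ 2) - deriv lam x) * Real.exp (I x)
        + (μ x - f x) * (Real.exp (I x) * (f x + μ x))) x := by
    intro x hx
    have hx' : r₀ < x := hx
    have hfev : f =ᶠ[nhds x] lam := by
      filter_upwards [Ioi_mem_nhds hx'] with t ht
      exact hfeq t (le_of_lt ht)
    have hlamder : HasDerivAt lam (deriv lam x) x :=
      (hdiff x hx'.le).hasDerivAt
    have hfder : HasDerivAt f (deriv lam x) x := hlamder.congr_of_eventuallyEq hfev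
    exact ((hμder x).sub hfder).mul ((hIder x).exp)
  have hgdiff : ∀ x ∈ Set.Ioi r₀, DifferentiableAt ℝ g x :=
    fun x hx => (hgder x hx).differentiableAt
  have hgderiv_nonneg : ∀ x ∈ Set.Ioi r₀, 0 ≤ deriv g x := by
    intro x hx
    rw [(hgder x hx).deriv]
    have hfx : f x = lam x := hfeq x (le_of_lt hx)
    have h1 : deriv lam x + (lam x) ^ 2 ≤ α ^ 2 := hineq x (le_of_lt hx)
    have hexp : 0 < Real.exp (I x) := Real.exp_pos _
    have key : ((α ^ 2 - μ x ^ 2) - deriv lam x) + (μ x - f x) * (f x + μ x)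
        = α ^ 2 - deriv lam x - lam x ^ 2 := by rw [hfx]; ring
    nlinarith [hexp]
  have hgcont' : Continuous g := by
    have : Continuous I := by
      rw [continuous_iff_continuousAt]
      exact fun s => (hIder s).differentiableAt.continuousAt
    exact (hμcont.sub hfcont).mul (Real.continuous_exp.comp this)
  have hmono : MonotoneOn g (Set.Ici r₀) := by
    apply monotoneOn_of_deriv_nonneg (convex_Ici r₀) hgcont'.continuousOn
    · rw [interior_Ici]
      exact fun x hx => (hgdiff x hx).differentiableWithinAt
    · rw [interior_Ici]
      exact hgderiv_nonneg
  have hg0 : g r₀ = 0 := by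
    rw [hgdef]
    simp [hμ0, hfeq r₀ le_rfl]
  intro r hr
  have hgr : 0 ≤ g r := by
    rw [← hg0]
    exact hmono Set.self_mem_Ici hr hr
  have hle : lam r ≤ μ r := by
    rw [hgdef] at hgr
    have hexp : 0 < Real.exp (I r) := Real.exp_pos _
    have hgr' : 0 ≤ (μ r - f r) * Real.exp (I r) := hgr
    have : 0 ≤ μ r - f r := nonneg_of_mul_nonneg_left hgr' hexp
    rw [hfeq r hr] at this
    linarith
  refine ⟨?_, lt_of_le_of_lt hle (hμlt r)⟩
  calc lam r ≤ μ r := hle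
    _ = _ := by rw [hμdef]
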